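/- Let G be a C[θ',θ'^{-1}]-module with connection and let G₀ ⊂ G be a free C[θ']-lattice stable under θ'²∂_{θ'}. Suppose G decomposes as G_reg ⊕ G_irr compatibly with G₀, where on G_irr the induced endomorphism of θ'²∂_{θ'} on G_{irr,0}/θ'G_{irr,0} has no eigenvalue 0, and on G_reg the V-filtration satisfies V^{γ+k}(G_{reg,0}/θ'G_{reg,0}) = 0 for k large. Then there exists k₁ such that for all k ≥ k₁, the map θ'²∂_{θ'} : V^{γ+k}(G₀/θ'G₀) → V^{γ+k+1}(G₀/θ'G₀) is surjective. -/
import Mathlib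


/-- Let `H = G₀/θ'G₀` (finite dimensional) with the induced endomorphism
`E` of `θ'²∂_{θ'}` and induced V-filtration `V^•`, and suppose `H = H_reg ⊕ H_irr`
compatibly with `E` and `V^•`, where on the irregular part `V^γ ⊇ H_irr` for all `γ`
and `E` has no eigenvalue `0`, while on the regular part `V^{γ+k} ∩ H_reg = 0` for
`k` large.  Then there exists `k₁` such that for all `k ≥ k₁`, the map
`E : V^{γ+k} → V^{γ+k+1}` is surjective. -/
theorem stmt_17 {H : Type*} [AddCommGroup H] [Module ℂ H] [FiniteDimensional ℂ H]
    (E : H →ₗ[ℂ] H) (V : ℝ → Submodule ℂ H) (Hreg Hirr : Submodule ℂ H)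
    (hcompl : IsCompl Hreg Hirr)
    (hEreg : ∀ x ∈ Hreg, E x ∈ Hreg)
    (hEirr : ∀ x ∈ Hirr, E x ∈ Hirr)
    (hVdec : ∀ γ γ' : ℝ, γ ≤ γ' → V γ' ≤ V γ)
    (hshift : ∀ γ : ℝ, ∀ x ∈ V γ, E x ∈ V (γ + 1))
    (hsplitV : ∀ γ : ℝ, V γ = (V γ ⊓ Hreg) ⊔ (V γ ⊓ Hirr))
    (hirrfull : ∀ γ : ℝ, Hirr ≤ V γ)
    (hirrinj : ∀ x ∈ Hirr, E x = 0 → x = 0)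
    (hregvan : ∀ γ : ℝ, ∃ k₀ : ℕ, ∀ k : ℕ, k₀ ≤ k → V (γ + k) ⊓ Hreg = ⊥) :
    ∀ γ : ℝ, ∃ k₁ : ℕ, ∀ k : ℕ, k₁ ≤ k →
      V (γ + k + 1) ≤ Submodule.map E (V (γ + k)) := by
  intro γ
  obtain ⟨k₀, hk₀⟩ := hregvan γ
  -- E restricted to Hirr is surjective
  set Er : Hirr →ₗ[ℂ] Hirr := E.restrict (fun x hx => hEirr x hx) with hEr
  have hinj : Function.Injective Er := by
    intro x y hxy
    have : E (x - y : Hirr) = 0 := by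
      have := congrArg (Subtype.val) hxy
      simp only [hEr, LinearMap.restrict_apply] at this
      simp [map_sub, this]
    have := hirrinj _ (Hirr.sub_mem x.2 y.2) this
    exact sub_eq_zero.mp (by exact_mod_cast this)
  have hsurj : Function.Surjective Er :=
    (LinearMap.injective_iff_surjective).mp hinj
  -- V(γ+k) = Hirr for k ≥ k₀
  have hVeq : ∀ k : ℕ, k₀ ≤ k → V (γ + k) = Hirr := by
    intro k hk
    apply le_antisymm
    · rw [hsplitV (γ + k), hk₀ k hk]
      simp
    · exact hirrfull _
  refine ⟨k₀, fun k hk y hy => ?_⟩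
  have h1 : V (γ + k + 1) = Hirr := by
    have : γ + k + 1 = γ + (k + 1 : ℕ) := by push_cast; ring
    rw [this, hVeq (k + 1) (le_trans hk (Nat.le_succ k))]
  rw [h1] at hy
  obtain ⟨x, hx⟩ := hsurj ⟨y, hy⟩
  refine ⟨x, ?_, ?_⟩
  · rw [hVeq k hk]; exact x.2
  · have := congrArg Subtype.val hx
    simpa [hEr, LinearMap.restrict_apply] using this
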